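/- Let b be holomorphic and injective on a neighborhood of a positively oriented simple closed contour γ and its interior, with b' nonvanishing there, let w be a point strictly inside γ, and let f be holomorphic on a neighborhood of γ and its interior. Then (1/2πi) ∮_γ f(u) b'(u)/(b(w) − b(u))² du = f'(w)/b'(w). -/

import Mathlib

open Complex Metric Set

/-- for `b` holomorphic and injective with nonvanishing
derivative on a neighborhood `V` of the closed disk bounded by the positively
oriented contour `γ = C(c,r)`, `f` holomorphic on `V`, and `w` strictly
inside `γ`:
`(1/2πi) ∮_γ f(u) b'(u)/(b(w) − b(u))² du = f'(w)/b'(w)`. -/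
theorem contour_integral_derivative_formula (c : ℂ) (r : ℝ) (hr : 0 < r)
    (V : Set ℂ) (hV : IsOpen V) (hVc : Metric.closedBall c r ⊆ V)
    (b f : ℂ → ℂ) (hb : DifferentiableOn ℂ b V) (hbinj : Set.InjOn b V)
    (hb' : ∀ u ∈ V, deriv b u ≠ 0) (hf : DifferentiableOn ℂ f V)
    (w : ℂ) (hw : w ∈ Metric.ball c r) :
    (1 / (2 * (Real.pi : ℂ) * Complex.I)) *
        (∮ u in C(c, r), f u * deriv b u / (b w - b u) ^ 2)
      = deriv f w / deriv b w := by
  have hwV : w ∈ V := hVc (ball_subset_closedBall hw)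
  -- the divided-difference function `d = dslope b w`
  set d : ℂ → ℂ := dslope b w with hd_def
  have hdV : DifferentiableOn ℂ d V :=
    (Complex.differentiableOn_dslope (hV.mem_nhds hwV)).mpr hb
  have hdw : d w = deriv b w := dslope_same b w
  have hdne : ∀ u ∈ V, d u ≠ 0 := by
    intro u hu
    rcases eq_or_ne u w with rfl | hne
    · rw [hdw]; exact hb' u hu
    · rw [hd_def, dslope_of_ne _ hne, slope_def_field]
      exact div_ne_zero (sub_ne_zero.2 (hbinj.ne hu hwV hne)) (sub_ne_zero.2 hne)
  have hkey : ∀ u, b u - b w = (u - w) * d u := by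
    intro u
    have h := sub_smul_dslope b w u
    rw [smul_eq_mul] at h
    exact h.symm
  -- facts about the sphere
  have hsV : sphere c r ⊆ V := sphere_subset_closedBall.trans hVc
  have hzw : ∀ z ∈ sphere c r, z ≠ w := by
    intro z hz h
    rw [mem_sphere] at hz
    rw [mem_ball] at hw
    rw [h] at hz
    rw [hz] at hw
    exact lt_irrefl r hw
  have hbne : ∀ z ∈ sphere c r, b w - b z ≠ 0 := fun z hz =>
    sub_ne_zero.2 (hbinj.ne hwV (hsV hz) (hzw z hz).symm)
  -- derivatives of `deriv f` and `deriv b` exist (analyticity)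
  have hdf : DifferentiableOn ℂ (deriv f) V :=
    ((hf.analyticOnNhd hV).deriv).differentiableOn
  have hdb : DifferentiableOn ℂ (deriv b) V :=
    ((hb.analyticOnNhd hV).deriv).differentiableOn
  -- the antiderivative part
  set F : ℂ → ℂ := fun u => f u / (b w - b u) with hF
  set F' : ℂ → ℂ :=
    fun u => deriv f u / (b w - b u) + f u * deriv b u / (b w - b u) ^ 2 with hF'
  set g : ℂ → ℂ := fun u => (u - w)⁻¹ * (deriv f u / d u) with hg
  have hderiv : ∀ z ∈ sphere c r, HasDerivAt F (F' z) z := by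
    intro z hz
    have hzV : z ∈ V := hsV hz
    have hbz : b w - b z ≠ 0 := hbne z hz
    have hfz : HasDerivAt f (deriv f z) z :=
      (hf.differentiableAt (hV.mem_nhds hzV)).hasDerivAt
    have hbz' : HasDerivAt (fun u => b w - b u) (-(deriv b z)) z :=
      ((hb.differentiableAt (hV.mem_nhds hzV)).hasDerivAt).const_sub (b w)
    have h := hfz.div hbz' hbz
    refine h.congr_deriv ?_
    rw [hF']
    field_simp
    ring
  -- pointwise identity on the sphere
  have hEq : Set.EqOn (fun u => f u * deriv b u / (b w - b u) ^ 2)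
      (fun u => F' u + g u) (sphere c r) := by
    intro z hz
    have hzV : z ∈ V := hsV hz
    have hbz : b w - b z ≠ 0 := hbne z hz
    have hdz : d z ≠ 0 := hdne z hzV
    have hzw0 : z - w ≠ 0 := sub_ne_zero.2 (hzw z hz)
    have hbw : b w - b z = -((z - w) * d z) := by
      rw [← hkey z]; ring
    simp only [hF', hg, hbw]
    field_simp
    ring
  -- continuity / integrability
  have hfc : ContinuousOn f (sphere c r) := hf.continuousOn.mono hsV
  have hden : ContinuousOn (fun u => b w - b u) (sphere c r) :=
    continuousOn_const.sub (hb.continuousOn.mono hsV)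
  have hF'c : ContinuousOn F' (sphere c r) := by
    apply ContinuousOn.add
    · exact (hdf.continuousOn.mono hsV).div hden hbne
    · exact (hfc.mul (hdb.continuousOn.mono hsV)).div (hden.pow 2)
        (fun z hz => pow_ne_zero 2 (hbne z hz))
  have hgc : ContinuousOn g (sphere c r) := by
    apply ContinuousOn.mul
    · exact (continuousOn_id.sub continuousOn_const).inv₀
        (fun z hz => sub_ne_zero.2 (hzw z hz))
    · exact (hdf.continuousOn.mono hsV).div (hdV.continuousOn.mono hsV)
        (fun z hz => hdne z (hsV hz))
  have hiF' : CircleIntegrable F' c r := hF'c.circleIntegrable hr.le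
  have hig : CircleIntegrable g c r := hgc.circleIntegrable hr.le
  -- compute the integral
  have h1 : (∮ u in C(c, r), f u * deriv b u / (b w - b u) ^ 2)
      = ∮ u in C(c, r), (F' u + g u) :=
    circleIntegral.integral_congr hr.le hEq
  have h2 := circleIntegral.integral_sub (f := fun u => F' u + g u) (g := g)
    (hiF'.add hig) hig
  simp only [add_sub_cancel_right] at h2
  have h3 : (∮ u in C(c, r), F' u) = 0 :=
    circleIntegral.integral_eq_zero_of_hasDerivWithinAt hr.le
      (fun z hz => (hderiv z hz).hasDerivWithinAt)
  rw [h3, eq_comm, sub_eq_zero] at h2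
  have h4 : (∮ u in C(c, r), g u)
      = (2 * (Real.pi : ℂ) * Complex.I) * (deriv f w / d w) := by
    have hH : DifferentiableOn ℂ (fun u => deriv f u / d u) (closedBall c r) :=
      (hdf.mono hVc).div (hdV.mono hVc) (fun z hz => hdne z (hVc hz))
    have h := hH.circleIntegral_sub_inv_smul hw
    simpa [hg, smul_eq_mul] using h
  rw [h1, h2, h4, hdw]
  have h2pi : (2 * (Real.pi : ℂ) * Complex.I) ≠ 0 := by
    simp [Real.pi_ne_zero, Complex.I_ne_zero, Complex.ofReal_ne_zero]
  rw [one_div, inv_mul_cancel_left₀ h2pi]
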